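/- Let T : C → C be k-strictly pseudocontractive with fixed point p, and let α ∈ (k, 1). Then for any x ∈ C, setting x' = α x + (1 − α) T x, one has ‖x' − p‖² ≤ ‖x − p‖² − (α − k)(1 − α)‖x − T x‖². In particular ‖x' − p‖ ≤ ‖x − p‖. -/

import Mathlib

theorem mann_step_fejer
    {H : Type*} [NormedAddCommGroup H] [InnerProductSpace ℝ H] [CompleteSpace H]
    (C : Set H) (hC : Convex ℝ C) (T : H → H) (hT : Set.MapsTo T C C)
    (k : ℝ) (hk0 : 0 ≤ k) (hk1 : k < 1)
    (hspc : ∀ x ∈ C, ∀ y ∈ C,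
      ‖T x - T y‖ ^ 2 ≤ ‖x - y‖ ^ 2 + k * ‖x - y - (T x - T y)‖ ^ 2)
    (p : H) (hp : p ∈ C) (hfix : T p = p)
    (α : ℝ) (hαk : k < α) (hα1 : α < 1)
    (x : H) (hx : x ∈ C) (x' : H) (hx' : x' = α • x + (1 - α) • T x) :
    ‖x' - p‖ ^ 2 ≤ ‖x - p‖ ^ 2 - (α - k) * (1 - α) * ‖x - T x‖ ^ 2 ∧
      ‖x' - p‖ ≤ ‖x - p‖ := by
  have hspc' := hspc x hx p hp
  rw [hfix] at hspc'
  have hxp : x' - p = α • (x - p) + (1 - α) • (T x - p) := by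
    rw [hx']; module
  set u := x - p with hu
  set v := T x - p with hv
  have huv : x - T x = u - v := by rw [hu, hv]; abel
  rw [huv]
  have hα0 : 0 ≤ α := le_of_lt (lt_of_le_of_lt hk0 hαk)
  have h1α : 0 ≤ 1 - α := by linarith
  -- expansions
  have e1 : ‖x' - p‖ ^ 2 = α ^ 2 * ‖u‖ ^ 2 + 2 * (α * (1 - α)) * inner ℝ u v
      + (1 - α) ^ 2 * ‖v‖ ^ 2 := by
    rw [hxp, @norm_add_sq_real, real_inner_smul_left, real_inner_smul_right,
      norm_smul, norm_smul, Real.norm_eq_abs, Real.norm_eq_abs,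
      abs_of_nonneg hα0, abs_of_nonneg h1α]
    ring
  have e2 : ‖u - v‖ ^ 2 = ‖u‖ ^ 2 - 2 * inner ℝ u v + ‖v‖ ^ 2 := by
    rw [@norm_sub_sq_real]
  have key : ‖x' - p‖ ^ 2 ≤ ‖u‖ ^ 2 - (α - k) * (1 - α) * ‖u - v‖ ^ 2 := by
    nlinarith [sq_nonneg (‖u - v‖), sq_nonneg α]
  refine ⟨key, ?_⟩
  have h2 : ‖x' - p‖ ^ 2 ≤ ‖u‖ ^ 2 := by
    nlinarith [sq_nonneg ‖u - v‖, mul_nonneg (mul_nonneg (by linarith : (0:ℝ) ≤ α - k) h1α) (sq_nonneg ‖u - v‖)]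
  nlinarith [norm_nonneg (x' - p), norm_nonneg u]
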